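/- For the system γ̇₁ = u₁, γ̇₂ = u₂(1−γ₁), γ̇₃ = u₂γ₁^p on ℝ³ with p ≥ 2 and controls with |u| = 1 a.e., every singular extremal starting at the origin with |γ₁| ≤ 1 satisfies γ₁ ≡ 0 and |u₂| = 1 a.e.; i.e., any dual curve λ with λ₁ = 0, λ₂(1−γ₁) + λ₃γ₁^p = 0 and the Goh condition λ₂ = p λ₃ γ₁^{p−1} along γ forces λ₂ = 0 and γ₁ = 0. -/
import Mathlib

lemma singular_key (p : ℕ) (hp : 2 ≤ p) (x l2 l3 : ℝ)
    (hb : |x| ≤ 1) (hne : ¬ (l2 = 0 ∧ l3 = 0))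
    (h2 : l2 * (1 - x) + l3 * x ^ p = 0)
    (hg : l2 = (p : ℝ) * l3 * x ^ (p - 1)) : x = 0 ∧ l2 = 0 := by
  have hl3 : l3 ≠ 0 := by
    intro h0
    exact hne ⟨by rw [hg, h0]; ring, h0⟩
  have hpsucc : p = (p - 1) + 1 := (Nat.succ_pred_eq_of_pos (by omega)).symm
  have hxp : x ^ p = x ^ (p - 1) * x := by conv_lhs => rw [hpsucc, pow_succ]
  have hkey : l3 * (x ^ (p - 1) * ((p : ℝ) * (1 - x) + x)) = 0 := by
    rw [hg, hxp] at h2; linarith [h2]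
  have hpos : (p : ℝ) * (1 - x) + x > 0 := by
    have h1x : -1 ≤ x := (abs_le.mp hb).1
    have h2x : x ≤ 1 := (abs_le.mp hb).2
    have hp2 : (2 : ℝ) ≤ (p : ℝ) := by exact_mod_cast hp
    nlinarith
  have hx0 : x = 0 := by
    rcases mul_eq_zero.mp hkey with h | h
    · exact absurd h hl3
    · rcases mul_eq_zero.mp h with h | h
      · exact pow_eq_zero_iff (by omega) |>.mp h
      · linarith
  refine ⟨hx0, ?_⟩
  rw [hg, hx0, zero_pow (by omega : p - 1 ≠ 0)]; ring

/-- the abnormality conditions `λ₁ = 0`,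
`λ₂(1−γ₁) + λ₃γ₁^p = 0` and the Goh condition `λ₂ = pλ₃γ₁^{p−1}` together with
`|γ₁| ≤ 1` and `λ ≠ 0` force `γ₁ ≡ 0` and `λ₂ ≡ 0`. -/
theorem singular_extremal_forces_gamma_zero
    (p : ℕ) (hp : 2 ≤ p) (γ1 : ℝ → ℝ) (lam : ℝ → ℝ × ℝ × ℝ)
    (hbound : ∀ t ∈ Set.Icc (0:ℝ) 1, |γ1 t| ≤ 1)
    (hlamne : ∀ t ∈ Set.Icc (0:ℝ) 1, lam t ≠ 0)
    (h1 : ∀ t ∈ Set.Icc (0:ℝ) 1, (lam t).1 = 0)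
    (h2 : ∀ t ∈ Set.Icc (0:ℝ) 1,
      (lam t).2.1 * (1 - γ1 t) + (lam t).2.2 * γ1 t ^ p = 0)
    (hgoh : ∀ t ∈ Set.Icc (0:ℝ) 1,
      (lam t).2.1 = (p : ℝ) * (lam t).2.2 * γ1 t ^ (p - 1)) :
    ∀ t ∈ Set.Icc (0:ℝ) 1, γ1 t = 0 ∧ (lam t).2.1 = 0 := by
  intro t ht
  have hne : ¬ ((lam t).2.1 = 0 ∧ (lam t).2.2 = 0) := by
    rintro ⟨ha, hb⟩
    apply hlamne t ht
    have : lam t = ((lam t).1, (lam t).2.1, (lam t).2.2) := rfl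
    rw [this, h1 t ht, ha, hb]
    rfl
  have := singular_key p hp (γ1 t) (lam t).2.1 (lam t).2.2
    (hbound t ht) hne (h2 t ht) (hgoh t ht)
  exact ⟨this.1, this.2⟩
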